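/- Let (M,g) be a complete Riemannian manifold and let {p_j}_{j≥1} be a sequence of points tending to infinity (i.e., d(p_j, p_0) → ∞ for a fixed basepoint p_0). Then for any compact set K ⊂ M, there exist infinitely many pairs of indices i, j such that every minimizing geodesic connecting p_i and p_j is disjoint from K. More precisely, there is a subsequence {p_{j_k}} and an index k_0 such that for all k, l ≥ k_0, every minimizing geodesic from p_{j_k} to p_{j_l} avoids K. -/

import Mathlib

/-!
**Lemma 9.5 (Statement 19).**  We model a complete Riemannian manifold by a
proper metric space (by the Hopf–Rinow theorem a complete Riemannian manifold
is a proper geodesic metric space), and a minimizing geodesic from `x` to `y`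
by a unit-speed curve `γ : ℝ → M` with `γ 0 = x`, `γ (d(x,y)) = y` which is
an isometric embedding of the interval `[0, d(x,y)]`.
-/

open Metric Filter Set

/-- `γ` is a (unit-speed) minimizing geodesic from `x` to `y`. -/
def IsMinGeodesic {M : Type*} [MetricSpace M] (x y : M) (γ : ℝ → M) : Prop :=
  γ 0 = x ∧ γ (dist x y) = y ∧
    ∀ s ∈ Set.Icc (0:ℝ) (dist x y), ∀ t ∈ Set.Icc (0:ℝ) (dist x y),
      dist (γ s) (γ t) = |s - t|

/-- Infinite Ramsey theorem for pairs, two colours. -/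
lemma infinite_ramsey_pairs (r : ℕ → ℕ → Prop) :
    ∃ φ : ℕ → ℕ, StrictMono φ ∧
      ((∀ i j, i < j → r (φ i) (φ j)) ∨ (∀ i j, i < j → ¬ r (φ i) (φ j))) := by
  classical
  -- key step: from an infinite set, pick a point and an infinite monochromatic tail
  have key : ∀ S : {S : Set ℕ // S.Infinite},
      ∃ P : ℕ × {T : Set ℕ // T.Infinite}, P.1 ∈ S.1 ∧ P.2.1 ⊆ S.1 ∧
        (∀ b ∈ P.2.1, P.1 < b) ∧
        ((∀ b ∈ P.2.1, r P.1 b) ∨ (∀ b ∈ P.2.1, ¬ r P.1 b)) := by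
    rintro ⟨S, hS⟩
    obtain ⟨a, haS⟩ := hS.nonempty
    have hT0 : (S \ Set.Iic a).Infinite := hS.diff (Set.finite_Iic a)
    set T0 : Set ℕ := S \ Set.Iic a with hT0def
    by_cases h : (T0 ∩ {b | r a b}).Infinite
    · refine ⟨⟨a, ⟨T0 ∩ {b | r a b}, h⟩⟩, haS, ?_, ?_, Or.inl ?_⟩
      · exact fun b hb => hb.1.1
      · intro b hb; exact lt_of_not_ge hb.1.2
      · intro b hb; exact hb.2
    · have hfin : (T0 ∩ {b | r a b}).Finite := Set.not_infinite.mp h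
      have h2 : (T0 \ (T0 ∩ {b | r a b})).Infinite := hT0.diff hfin
      refine ⟨⟨a, ⟨T0 \ (T0 ∩ {b | r a b}), h2⟩⟩, haS, ?_, ?_, Or.inr ?_⟩
      · exact fun b hb => hb.1.1
      · intro b hb; exact lt_of_not_ge hb.1.2
      · intro b hb
        intro hr
        exact hb.2 ⟨hb.1, hr⟩
  choose F hF1 hF2 hF3 hF4 using key
  -- iterate
  let st : ℕ → {S : Set ℕ // S.Infinite} := fun n =>
    Nat.rec ⟨Set.univ, Set.infinite_univ⟩ (fun _ S => (F S).2) n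
  let a : ℕ → ℕ := fun n => (F (st n)).1
  have hst_succ : ∀ n, st (n + 1) = (F (st n)).2 := fun n => rfl
  have hmem : ∀ n, a n ∈ (st n).1 := fun n => hF1 (st n)
  have hsub : ∀ n, ((st (n + 1)) : {S : Set ℕ // S.Infinite}).1 ⊆ (st n).1 := by
    intro n; rw [hst_succ]; exact hF2 (st n)
  have hlt : ∀ n, ∀ b ∈ (st (n + 1)).1, a n < b := by
    intro n; rw [hst_succ]; exact hF3 (st n)
  have hcol : ∀ n, (∀ b ∈ (st (n + 1)).1, r (a n) b) ∨
      (∀ b ∈ (st (n + 1)).1, ¬ r (a n) b) := by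
    intro n; rw [hst_succ]; exact hF4 (st n)
  have hchain : ∀ m n, m < n → (st n).1 ⊆ (st (m + 1)).1 := by
    intro m n hmn
    induction n with
    | zero => omega
    | succ k ih =>
      rcases Nat.lt_succ_iff_lt_or_eq.mp hmn with h | h
      · exact (hsub k).trans (ih h)
      · rw [h]
  have ha : StrictMono a := by
    apply strictMono_nat_of_lt_succ
    intro n
    exact hlt n _ (hmem (n + 1))
  have hpair : ∀ m n, m < n → a n ∈ (st (m + 1)).1 := fun m n h => hchain m n h (hmem n)
  -- pigeonhole on colours
  set C : ℕ → Prop := fun n => ∀ b ∈ (st (n + 1)).1, r (a n) b with hC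
  by_cases hCinf : (setOf C).Infinite
  · refine ⟨a ∘ Nat.nth C, ha.comp (Nat.nth_strictMono hCinf), Or.inl ?_⟩
    intro i j hij
    have h1 : C (Nat.nth C i) := Nat.nth_mem_of_infinite hCinf i
    have h2 : Nat.nth C i < Nat.nth C j := Nat.nth_strictMono hCinf hij
    exact h1 _ (hpair _ _ h2)
  · have hCcinf : (setOf (fun n => ¬ C n)).Infinite := by
      by_contra h
      have h1 : (Set.univ : Set ℕ) = setOf C ∪ setOf (fun n => ¬ C n) := by
        ext x; simp [Classical.em]; exact Classical.em (C x)
      have hfin : (Set.univ : Set ℕ).Finite := by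
        rw [h1]; exact (Set.not_infinite.mp hCinf).union (Set.not_infinite.mp h)
      exact Set.infinite_univ hfin
    refine ⟨a ∘ Nat.nth (fun n => ¬ C n), ha.comp (Nat.nth_strictMono hCcinf), Or.inr ?_⟩
    intro i j hij
    have h1 : ¬ C (Nat.nth (fun n => ¬ C n) i) := Nat.nth_mem_of_infinite hCcinf i
    have h2 : Nat.nth (fun n => ¬ C n) i < Nat.nth (fun n => ¬ C n) j :=
      Nat.nth_strictMono hCcinf hij
    have h3 := (hcol (Nat.nth (fun n => ¬ C n) i)).resolve_left h1
    exact h3 _ (hpair _ _ h2)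

/-- Reversal of a minimizing geodesic. -/
lemma IsMinGeodesic.symm {M : Type*} [MetricSpace M] {x y : M} {γ : ℝ → M}
    (h : IsMinGeodesic x y γ) :
    IsMinGeodesic y x (fun t => γ (dist x y - t)) := by
  obtain ⟨h0, h1, hiso⟩ := h
  refine ⟨by simpa using h1, by simpa [dist_comm y x] using h0, ?_⟩
  intro s hs t ht
  rw [dist_comm y x] at hs ht
  have hs' : dist x y - s ∈ Set.Icc (0:ℝ) (dist x y) := ⟨by linarith [hs.2], by linarith [hs.1]⟩
  have ht' : dist x y - t ∈ Set.Icc (0:ℝ) (dist x y) := ⟨by linarith [ht.2], by linarith [ht.1]⟩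
  rw [hiso _ hs' _ ht']
  rw [abs_sub_comm]
  ring_nf

/-- Let `(M,g)` be a complete Riemannian manifold and let
`p_j` be a sequence of points tending to infinity (`d(p_j, x₀) → ∞` for a
fixed basepoint `x₀`).  Then for any compact set `K ⊆ M` there are infinitely
many pairs of indices `i, j` such that every minimizing geodesic connecting
`p_i` and `p_j` is disjoint from `K`: there are a subsequence `p ∘ φ` and an
index `k₀` such that for all `k, l ≥ k₀`, every minimizing geodesic from
`p (φ k)` to `p (φ l)` avoids `K`. -/
theorem minimal_geodesics_avoid_compact {M : Type*} [MetricSpace M]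
    [ProperSpace M] (p : ℕ → M) (x₀ : M)
    (hp : Tendsto (fun j => dist x₀ (p j)) atTop atTop)
    (K : Set M) (hK : IsCompact K) :
    ∃ φ : ℕ → ℕ, StrictMono φ ∧ ∃ k₀ : ℕ, ∀ k ≥ k₀, ∀ l ≥ k₀,
      ∀ γ : ℝ → M, IsMinGeodesic (p (φ k)) (p (φ l)) γ →
        ∀ s ∈ Set.Icc (0:ℝ) (dist (p (φ k)) (p (φ l))), γ s ∉ K := by
  classical
  -- bound K inside a closed ball around x₀
  obtain ⟨R, hR0, hRK⟩ := hK.isBounded.subset_closedBall_lt 0 x₀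
  -- "bad" relation: some minimizing geodesic from p i to p j meets K
  set bad : ℕ → ℕ → Prop := fun i j =>
    ∃ γ : ℝ → M, IsMinGeodesic (p i) (p j) γ ∧
      ∃ s ∈ Set.Icc (0:ℝ) (dist (p i) (p j)), γ s ∈ K with hbad_def
  have bad_symm : ∀ i j, bad i j → bad j i := by
    rintro i j ⟨γ, hγ, s, hs, hsK⟩
    refine ⟨fun t => γ (dist (p i) (p j) - t), hγ.symm, dist (p i) (p j) - s, ?_, by
      simpa using hsK⟩
    rw [dist_comm (p j) (p i)]
    exact ⟨by linarith [hs.2], by linarith [hs.1]⟩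
  obtain ⟨φ, hφ, hcase⟩ := infinite_ramsey_pairs bad
  have hp' : Tendsto (fun i => dist x₀ (p (φ i))) atTop atTop :=
    hp.comp hφ.tendsto_atTop
  rcases hcase with hbadall | hgood
  · -- all pairs bad: derive a contradiction using properness
    exfalso
    set a : M := p (φ 0) with ha_def
    set d₁ : ℝ := dist x₀ a with hd₁
    set T : ℝ := d₁ + R + 1 with hT
    have hT0 : 0 ≤ T := by positivity
    obtain ⟨N₀, hN₀⟩ := (hp'.eventually_ge_atTop (T + d₁)).exists_forall_of_atTop
    set N : ℕ := max N₀ 1 with hN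
    -- for each k, a minimizing geodesic from a to p (φ (N + k))
    have hgeo : ∀ k : ℕ, ∃ γ : ℝ → M, IsMinGeodesic a (p (φ (N + k))) γ := by
      intro k
      obtain ⟨γ, hγ, _⟩ := hbadall 0 (N + k) (by omega)
      exact ⟨γ, hγ⟩
    choose γ hγ using hgeo
    have hdd : ∀ k : ℕ, T + d₁ ≤ dist x₀ (p (φ (N + k))) := by
      intro k
      exact hN₀ (N + k) (le_trans (le_max_left _ _) (Nat.le_add_right N k))
    have hD : ∀ k : ℕ, T ≤ dist a (p (φ (N + k))) := by
      intro k
      have h1 : dist x₀ (p (φ (N + k))) ≤ dist x₀ a + dist a (p (φ (N + k))) :=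
        dist_triangle _ _ _
      have := hdd k
      linarith
    set v : ℕ → M := fun k => γ k T with hv
    have hvball : ∀ k, v k ∈ closedBall a T := by
      intro k
      obtain ⟨h0, h1, hiso⟩ := hγ k
      have := hiso 0 ⟨le_refl _, dist_nonneg⟩ T ⟨hT0, hD k⟩
      simp only [h0] at this
      rw [mem_closedBall, dist_comm]
      rw [this]
      rw [abs_of_nonpos (by linarith)]
      linarith
    have hvp : ∀ k, dist (v k) (p (φ (N + k))) = dist a (p (φ (N + k))) - T := by
      intro k
      obtain ⟨h0, h1, hiso⟩ := hγ k
      have := hiso T ⟨hT0, hD k⟩ (dist a (p (φ (N + k))))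
        ⟨dist_nonneg, le_refl _⟩
      rw [h1] at this
      rw [this, abs_of_nonpos (by linarith [hD k])]
      ring
    -- two close points among the v k
    obtain ⟨x, -, ψ, hψ, hlim⟩ := (isCompact_closedBall a T).tendsto_subseq hvball
    obtain ⟨m, hm⟩ := Metric.tendsto_atTop.mp hlim (1/4) (by norm_num)
    have hclose : dist (v (ψ m)) (v (ψ (m+1))) ≤ 1/2 := by
      have h1 := hm m (le_refl m)
      have h2 := hm (m+1) (Nat.le_succ m)
      calc dist (v (ψ m)) (v (ψ (m+1))) ≤ dist (v (ψ m)) x + dist x (v (ψ (m+1))) :=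
            dist_triangle _ _ _
        _ ≤ 1/4 + 1/4 := by
            rw [dist_comm x]
            exact add_le_add (le_of_lt h1) (le_of_lt h2)
        _ = 1/2 := by norm_num
    set i : ℕ := N + ψ m with hi
    set j : ℕ := N + ψ (m+1) with hj
    have hij : i < j := by
      have h : ψ m < ψ (m+1) := hψ (by omega)
      omega
    -- lower bound from badness of (i, j)
    obtain ⟨δ, hδ, s, hs, hsK⟩ := hbadall i j hij
    obtain ⟨hδ0, hδ1, hδiso⟩ := hδ
    have hq : dist x₀ (δ s) ≤ R := by
      have := hRK hsK; simpa [mem_closedBall, dist_comm] using this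
    have h1 : dist (p (φ i)) (δ s) = s := by
      have := hδiso 0 ⟨le_refl _, dist_nonneg⟩ s hs
      rw [hδ0] at this
      rw [this, abs_of_nonpos (by linarith [hs.1])]
      ring
    have h2 : dist (δ s) (p (φ j)) = dist (p (φ i)) (p (φ j)) - s := by
      have := hδiso s hs (dist (p (φ i)) (p (φ j))) ⟨dist_nonneg, le_refl _⟩
      rw [hδ1] at this
      rw [this, abs_of_nonpos (by linarith [hs.2])]
      ring
    have hlow1 : dist x₀ (p (φ i)) ≤ R + s := by
      calc dist x₀ (p (φ i)) ≤ dist x₀ (δ s) + dist (δ s) (p (φ i)) := dist_triangle _ _ _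
        _ ≤ R + s := by rw [dist_comm (δ s)]; linarith [h1, hq]
    have hlow2 : dist x₀ (p (φ j)) ≤ R + (dist (p (φ i)) (p (φ j)) - s) := by
      calc dist x₀ (p (φ j)) ≤ dist x₀ (δ s) + dist (δ s) (p (φ j)) := dist_triangle _ _ _
        _ ≤ _ := by linarith [h2, hq]
    -- upper bound through the two close points
    have hup : dist (p (φ i)) (p (φ j)) ≤
        (dist a (p (φ i)) - T) + 1/2 + (dist a (p (φ j)) - T) := by
      have e1 : dist (p (φ i)) (v (ψ m)) = dist a (p (φ i)) - T := by
        rw [dist_comm]; exact hvp (ψ m)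
      have e2 : dist (v (ψ (m+1))) (p (φ j)) = dist a (p (φ j)) - T := hvp (ψ (m+1))
      calc dist (p (φ i)) (p (φ j)) ≤
            dist (p (φ i)) (v (ψ m)) + dist (v (ψ m)) (v (ψ (m+1)))
              + dist (v (ψ (m+1))) (p (φ j)) := dist_triangle4 _ _ _ _
        _ ≤ (dist a (p (φ i)) - T) + 1/2 + (dist a (p (φ j)) - T) := by
            rw [e1, e2]; linarith [hclose]
    have hDi : dist a (p (φ i)) ≤ d₁ + dist x₀ (p (φ i)) := by
      rw [dist_comm x₀ a] at hd₁
      calc dist a (p (φ i)) ≤ dist a x₀ + dist x₀ (p (φ i)) := dist_triangle _ _ _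
        _ = d₁ + dist x₀ (p (φ i)) := by rw [hd₁]
    have hDj : dist a (p (φ j)) ≤ d₁ + dist x₀ (p (φ j)) := by
      rw [dist_comm x₀ a] at hd₁
      calc dist a (p (φ j)) ≤ dist a x₀ + dist x₀ (p (φ j)) := dist_triangle _ _ _
        _ = d₁ + dist x₀ (p (φ j)) := by rw [hd₁]
    -- combine: contradiction
    have : dist x₀ (p (φ i)) + dist x₀ (p (φ j)) - 2*R ≤ dist (p (φ i)) (p (φ j)) := by
      linarith
    rw [hT] at hup
    linarith
  · -- all pairs good: this is the desired subsequence
    obtain ⟨k₀, hk₀⟩ := (hp'.eventually_gt_atTop R).exists_forall_of_atTop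
    refine ⟨φ, hφ, k₀, ?_⟩
    intro k hk l hl γ hγ s hs hsK
    rcases lt_trichotomy k l with h | h | h
    · exact hgood k l h ⟨γ, hγ, s, hs, hsK⟩
    · -- diagonal: p (φ k) itself is outside K
      subst h
      have hd0 : dist (p (φ k)) (p (φ k)) = 0 := dist_self _
      rw [hd0] at hs
      have hs0 : s = 0 := le_antisymm hs.2 hs.1
      rw [hs0, hγ.1] at hsK
      have := hRK hsK
      rw [mem_closedBall, dist_comm] at this
      exact absurd this (not_le.mpr (hk₀ k hk))
    · exact hgood l k h (bad_symm _ _ ⟨γ, hγ, s, hs, hsK⟩)
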